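/- Let M, N be closed subspaces of a Hilbert space H. The sum M + N is closed if and only if the cosine of the Friedrichs angle c[M,N] is strictly less than 1. -/

import Mathlib

noncomputable section

open scoped InnerProductSpace ENNReal

variable {H K : Type*} [NormedAddCommGroup H] [InnerProductSpace ℂ H] [CompleteSpace H]
  [NormedAddCommGroup K] [InnerProductSpace ℂ K] [CompleteSpace K]

/-- Orthogonal projection onto (the closure of) a subspace, as an operator `H →L[ℂ] H`. -/
def sproj (M : Submodule ℂ H) : H →L[ℂ] H :=
  M.topologicalClosure.subtypeL ∘L Submodule.orthogonalProjectionOnto M.topologicalClosure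

/-- The reduced minimum modulus of a bounded operator. -/
def gammaRMM (T : H →L[ℂ] K) : ℝ :=
  sInf ((fun x => ‖T x‖) '' {x : H | x ∈ (LinearMap.ker (T : H →ₗ[ℂ] K))ᗮ ∧ ‖x‖ = 1})

/-- `M ⊖ N`. -/
def ominus (M N : Submodule ℂ H) : Submodule ℂ H := M ⊓ (M ⊓ N)ᗮ

open Classical in
/-- The cosine of the Friedrichs angle between two subspaces. -/
def angleCos (M N : Submodule ℂ H) : ℝ :=
  if M ≤ N ∨ N ≤ M then 0
  else sSup {r : ℝ | ∃ x ∈ ominus M N, ∃ y ∈ ominus N M,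
    ‖x‖ = 1 ∧ ‖y‖ = 1 ∧ r = ‖(inner ℂ x y : ℂ)‖}

/-- The sine of the Friedrichs angle. -/
def angleSin (M N : Submodule ℂ H) : ℝ := Real.sqrt (1 - angleCos M N ^ 2)

variable {I : Type*}

/-- `(w i, W i)` is a fusion frame (frame of subspaces) with bounds `A`, `B`. -/
def IsFusionFrameWith (w : I → ℝ) (W : I → Submodule ℂ H) (A B : ℝ) : Prop :=
  0 < A ∧ 0 < B ∧ (∀ i, IsClosed (W i : Set H)) ∧
    ∀ f : H, A * ‖f‖ ^ 2 ≤ ∑' i, w i ^ 2 * ‖sproj (W i) f‖ ^ 2 ∧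
      ∑' i, w i ^ 2 * ‖sproj (W i) f‖ ^ 2 ≤ B * ‖f‖ ^ 2

/-- `(w i, W i)` is a fusion frame for some bounds. -/
def IsFusionFrame (w : I → ℝ) (W : I → Submodule ℂ H) : Prop :=
  ∃ A B : ℝ, IsFusionFrameWith w W A B

/-- a family of mutually orthogonal closed subspaces with dense span. -/
def IsOBS (E : I → Submodule ℂ H) : Prop :=
  (∀ i, IsClosed (E i : Set H)) ∧
  (∀ i j, i ≠ j → ∀ x ∈ E i, ∀ y ∈ E j, (inner ℂ x y : ℂ) = 0) ∧
  (⨆ i, E i).topologicalClosure = ⊤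

/-- A minimal sequence of subspaces. -/
def IsMinimal (W : I → Submodule ℂ H) : Prop :=
  ∀ i, W i ⊓ (⨆ j ∈ {j : I | j ≠ i}, W j).topologicalClosure = ⊥

/-- The kernel of the synthesis operator of `(w i, W i)`, as a subspace of `⊕₂ W i`. -/
def synthesisKernel (w : I → ℝ) (W : I → Submodule ℂ H) :
    Submodule ℂ (lp (fun i => W i) 2) where
  carrier := {g | ∀ f : H, HasSum (fun i => (w i : ℂ) * (inner ℂ ((g i : H)) f : ℂ)) 0}
  zero_mem' := by
    intro f
    have : (fun i => (w i : ℂ) * (inner ℂ (((0 : lp (fun i => W i) 2) i : H)) f : ℂ)) =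
        fun _ => 0 := by
      funext i; simp [lp.coeFn_zero]
    rw [this]; exact hasSum_zero
  add_mem' := by
    intro a b ha hb f
    have h := (ha f).add (hb f)
    rw [add_zero] at h
    have he : (fun i => (w i : ℂ) * (inner ℂ (((a + b) i : H)) f : ℂ)) =
        fun i => (w i : ℂ) * (inner ℂ ((a i : H)) f : ℂ) +
          (w i : ℂ) * (inner ℂ ((b i : H)) f : ℂ) := by
      funext i
      have h2 : ((a + b) i : ↥(W i)) = a i + b i := by rw [lp.coeFn_add]; rfl
      rw [h2, Submodule.coe_add, inner_add_left]; ring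
    rw [he]; exact h
  smul_mem' := by
    intro c a ha f
    have h := (ha f).mul_left (starRingEnd ℂ c)
    rw [mul_zero] at h
    have he : (fun i => (w i : ℂ) * (inner ℂ (((c • a) i : H)) f : ℂ)) =
        fun i => (starRingEnd ℂ c) * ((w i : ℂ) * (inner ℂ ((a i : H)) f : ℂ)) := by
      funext i
      have h2 : ((c • a) i : ↥(W i)) = c • a i := by rw [lp.coeFn_smul]; rfl
      rw [h2, Submodule.coe_smul, inner_smul_left]; ring
    rw [he]; exact h

/-- The excess of a fusion frame. -/
def fusionExcess (w : I → ℝ) (W : I → Submodule ℂ H) : Cardinal :=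
  Module.rank ℂ (synthesisKernel w W)



namespace FriedrichsAux
set_option linter.unusedSectionVars false

variable {H : Type*} [NormedAddCommGroup H] [InnerProductSpace ℂ H] [CompleteSpace H]

lemma exists_unit {K : Submodule ℂ H} (h : K ≠ ⊥) : ∃ x, x ∈ K ∧ ‖x‖ = 1 := by
  obtain ⟨v, hv, hv0⟩ := Submodule.ne_bot_iff K |>.1 h
  have hvn : ‖v‖ ≠ 0 := norm_ne_zero_iff.2 hv0
  refine ⟨((‖v‖⁻¹ : ℝ) : ℂ) • v, K.smul_mem _ hv, ?_⟩
  rw [norm_smul, Complex.norm_real, Real.norm_eq_abs, abs_inv, abs_norm]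
  field_simp

lemma le_sup_inf_orth {J M : Submodule ℂ H} (hJ : IsClosed (J : Set H)) (hJM : J ≤ M) :
    M ≤ J ⊔ (M ⊓ Jᗮ) := by
  haveI : CompleteSpace J := hJ.completeSpace_coe
  intro x hx
  have h1 : (Submodule.orthogonalProjectionOnto J x : H) ∈ J := (Submodule.orthogonalProjectionOnto J x).2
  refine Submodule.mem_sup.2 ⟨_, h1, x - Submodule.orthogonalProjectionOnto J x,
    Submodule.mem_inf.2 ⟨M.sub_mem hx (hJM h1), J.sub_starProjection_mem_orthogonal x⟩,
    by abel⟩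

lemma sup_closed_iff {A B : Submodule ℂ H} (hA : IsClosed (A : Set H)) (hBA : B ≤ Aᗮ) :
    IsClosed ((A ⊔ B : Submodule ℂ H) : Set H) ↔ IsClosed (B : Set H) := by
  haveI : CompleteSpace A := hA.completeSpace_coe
  have hPzero : ∀ b ∈ B, Submodule.orthogonalProjectionOnto A b = 0 := fun b hb =>
    Submodule.orthogonalProjectionOnto_eq_zero_iff.2 (hBA hb)
  constructor
  · intro h
    have hBeq : B = (A ⊔ B) ⊓ Aᗮ := by
      apply le_antisymm
      · exact le_inf le_sup_right hBA
      · intro z hz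
        obtain ⟨hz1, hz2⟩ := Submodule.mem_inf.1 hz
        obtain ⟨a, ha, b, hb, rfl⟩ := Submodule.mem_sup.1 hz1
        have haA' : a ∈ Aᗮ := by
          have h3 : a = (a + b) - b := by abel
          rw [h3]; exact Aᗮ.sub_mem hz2 (hBA hb)
        have ha0 : a = 0 := by
          have := (Submodule.mem_orthogonal A a).1 haA' a ha
          exact inner_self_eq_zero.1 this
        rw [ha0, zero_add]; exact hb
    rw [hBeq, Submodule.coe_inf]
    exact h.inter (Submodule.isClosed_orthogonal A)
  · intro h
    have hset : ((A ⊔ B : Submodule ℂ H) : Set H) =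
        (fun z => z - (Submodule.orthogonalProjectionOnto A z : H)) ⁻¹' (B : Set H) := by
      ext z
      simp only [Set.mem_preimage, SetLike.mem_coe]
      constructor
      · intro hz
        obtain ⟨a, ha, b, hb, rfl⟩ := Submodule.mem_sup.1 hz
        have hPa : Submodule.orthogonalProjectionOnto A (a + b) = ⟨a, ha⟩ := by
          rw [map_add, hPzero b hb, add_zero]
          exact Submodule.orthogonalProjectionOnto_mem_subspace_eq_self ⟨a, ha⟩
        rw [hPa]
        simpa using hb
      · intro hz
        have hzz : z = (Submodule.orthogonalProjectionOnto A z : H) + (z - Submodule.orthogonalProjectionOnto A z) := by abel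
        rw [hzz]
        exact Submodule.mem_sup.2 ⟨_, (Submodule.orthogonalProjectionOnto A z).2, _, hz, rfl⟩
    rw [hset]
    exact IsClosed.preimage
      (continuous_id.sub (continuous_subtype_val.comp (Submodule.orthogonalProjectionOnto A).continuous)) h

def addMap (K L : Submodule ℂ H) : (K × L) →L[ℂ] H :=
  K.subtypeL.comp (ContinuousLinearMap.fst ℂ K L) +
    L.subtypeL.comp (ContinuousLinearMap.snd ℂ K L)

lemma addMap_apply (K L : Submodule ℂ H) (a : K × L) : addMap K L a = ↑a.1 + ↑a.2 := rfl

lemma closed_of_bound {K L : Submodule ℂ H} (hK : IsClosed (K : Set H))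
    (hL : IsClosed (L : Set H)) {c : ℝ} (hc0 : 0 ≤ c) (hc1 : c < 1)
    (hb : ∀ x ∈ K, ∀ y ∈ L, ‖x‖ = 1 → ‖y‖ = 1 → ‖(inner ℂ x y : ℂ)‖ ≤ c) :
    IsClosed ((K ⊔ L : Submodule ℂ H) : Set H) := by
  haveI : CompleteSpace K := hK.completeSpace_coe
  haveI : CompleteSpace L := hL.completeSpace_coe
  have hb' : ∀ x ∈ K, ∀ y ∈ L, ‖(inner ℂ x y : ℂ)‖ ≤ c * (‖x‖ * ‖y‖) := by
    intro x hx y hy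
    rcases eq_or_ne x 0 with rfl | hx0
    · simp
    rcases eq_or_ne y 0 with rfl | hy0
    · simp
    have hxn : ‖x‖ ≠ 0 := norm_ne_zero_iff.2 hx0
    have hyn : ‖y‖ ≠ 0 := norm_ne_zero_iff.2 hy0
    have hxu : ‖((‖x‖⁻¹ : ℝ) : ℂ) • x‖ = 1 := by
      rw [norm_smul, Complex.norm_real, Real.norm_eq_abs, abs_inv, abs_norm]; field_simp
    have hyu : ‖((‖y‖⁻¹ : ℝ) : ℂ) • y‖ = 1 := by
      rw [norm_smul, Complex.norm_real, Real.norm_eq_abs, abs_inv, abs_norm]; field_simp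
    have h1 := hb _ (K.smul_mem _ hx) _ (L.smul_mem _ hy) hxu hyu
    rw [inner_smul_left, inner_smul_right, Complex.conj_ofReal, norm_mul, norm_mul,
      Complex.norm_real, Complex.norm_real, Real.norm_eq_abs, Real.norm_eq_abs,
      abs_inv, abs_inv, abs_norm, abs_norm] at h1
    have hxp : (0:ℝ) < ‖x‖ := lt_of_le_of_ne (norm_nonneg _) (Ne.symm hxn)
    have hyp : (0:ℝ) < ‖y‖ := lt_of_le_of_ne (norm_nonneg _) (Ne.symm hyn)
    calc ‖(inner ℂ x y : ℂ)‖ = (‖x‖ * ‖y‖) * (‖x‖⁻¹ * (‖y‖⁻¹ * ‖(inner ℂ x y : ℂ)‖)) := by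
          field_simp
      _ ≤ (‖x‖ * ‖y‖) * c := by
          apply mul_le_mul_of_nonneg_left h1 (by positivity)
      _ = c * (‖x‖ * ‖y‖) := by ring
  have key : ∀ a : K × L, ‖a‖ ≤ Real.sqrt (1 - c)⁻¹ * ‖addMap K L a‖ := by
    rintro ⟨x, y⟩
    have hinner := hb' (x : H) x.2 (y : H) y.2
    have hre : |2 * RCLike.re (inner ℂ (x:H) (y:H) : ℂ)| ≤ 2 * (c * (‖(x:H)‖ * ‖(y:H)‖)) := by
      rw [abs_mul]
      have : |RCLike.re (inner ℂ (x:H) (y:H) : ℂ)| ≤ ‖(inner ℂ (x:H) (y:H) : ℂ)‖ :=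
        RCLike.abs_re_le_norm _
      calc |(2:ℝ)| * |RCLike.re (inner ℂ (x:H) (y:H) : ℂ)|
          ≤ 2 * ‖(inner ℂ (x:H) (y:H) : ℂ)‖ := by
            rw [abs_two]; exact mul_le_mul_of_nonneg_left this (by norm_num)
        _ ≤ 2 * (c * (‖(x:H)‖ * ‖(y:H)‖)) :=
            mul_le_mul_of_nonneg_left hinner (by norm_num)
    have hsq : ‖(x:H) + (y:H)‖ ^ 2 = ‖(x:H)‖ ^ 2 + 2 * RCLike.re (inner ℂ (x:H) (y:H) : ℂ)
        + ‖(y:H)‖ ^ 2 := norm_add_sq _ _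
    have hlow : (1 - c) * (‖(x:H)‖ ^ 2 + ‖(y:H)‖ ^ 2) ≤ ‖(x:H) + (y:H)‖ ^ 2 := by
      have h2 : 2 * (‖(x:H)‖ * ‖(y:H)‖) ≤ ‖(x:H)‖ ^ 2 + ‖(y:H)‖ ^ 2 := by nlinarith [sq_nonneg (‖(x:H)‖ - ‖(y:H)‖)]
      nlinarith [abs_le.1 hre, mul_nonneg hc0 (mul_nonneg (norm_nonneg (x:H)) (norm_nonneg (y:H)))]
    have hnorm : ‖((x, y) : K × L)‖ ^ 2 ≤ ‖(x:H)‖ ^ 2 + ‖(y:H)‖ ^ 2 := by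
      have hxc : ‖x‖ = ‖(x:H)‖ := rfl
      have hyc : ‖y‖ = ‖(y:H)‖ := rfl
      rw [Prod.norm_def]
      rcases max_cases ‖x‖ ‖y‖ with ⟨h, -⟩ | ⟨h, -⟩ <;> rw [h] <;>
        nlinarith [sq_nonneg ‖(x:H)‖, sq_nonneg ‖(y:H)‖, norm_nonneg (x:H), norm_nonneg (y:H)]
    have h1c : (0:ℝ) < 1 - c := by linarith
    have hfin : ‖((x, y) : K × L)‖ ^ 2 ≤ (1 - c)⁻¹ * ‖addMap K L (x, y)‖ ^ 2 := by
      rw [addMap_apply]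
      rw [le_inv_mul_iff₀ h1c]
      calc (1 - c) * ‖((x, y) : K × L)‖ ^ 2 ≤ (1 - c) * (‖(x:H)‖ ^ 2 + ‖(y:H)‖ ^ 2) :=
            mul_le_mul_of_nonneg_left hnorm (le_of_lt h1c)
        _ ≤ _ := hlow
    calc ‖((x, y) : K × L)‖ = Real.sqrt (‖((x, y) : K × L)‖ ^ 2) :=
          (Real.sqrt_sq (norm_nonneg _)).symm
      _ ≤ Real.sqrt ((1 - c)⁻¹ * ‖addMap K L (x, y)‖ ^ 2) := Real.sqrt_le_sqrt hfin
      _ = Real.sqrt (1 - c)⁻¹ * ‖addMap K L (x, y)‖ := by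
          rw [Real.sqrt_mul (by positivity), Real.sqrt_sq (norm_nonneg _)]
  have hanti : AntilipschitzWith ⟨Real.sqrt (1 - c)⁻¹, Real.sqrt_nonneg _⟩ (addMap K L) :=
    AddMonoidHomClass.antilipschitz_of_bound (addMap K L) key
  have hrange : Set.range (addMap K L) = ((K ⊔ L : Submodule ℂ H) : Set H) := by
    ext z
    constructor
    · rintro ⟨⟨x, y⟩, rfl⟩
      exact Submodule.mem_sup.2 ⟨x, x.2, y, y.2, rfl⟩
    · intro hz
      obtain ⟨a, ha, b, hb, rfl⟩ := Submodule.mem_sup.1 hz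
      exact ⟨(⟨a, ha⟩, ⟨b, hb⟩), rfl⟩
  rw [← hrange]
  exact hanti.isClosed_range (addMap K L).uniformContinuous

set_option maxHeartbeats 1000000 in
lemma bound_of_closed {K L : Submodule ℂ H} (hK : IsClosed (K : Set H))
    (hL : IsClosed (L : Set H)) (hKL : K ⊓ L = ⊥)
    (hcl : IsClosed ((K ⊔ L : Submodule ℂ H) : Set H)) :
    ∃ c : ℝ, 0 ≤ c ∧ c < 1 ∧
      ∀ x ∈ K, ∀ y ∈ L, ‖x‖ = 1 → ‖y‖ = 1 → ‖(inner ℂ x y : ℂ)‖ ≤ c := by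
  haveI : CompleteSpace K := hK.completeSpace_coe
  haveI : CompleteSpace L := hL.completeSpace_coe
  haveI : CompleteSpace (K ⊔ L : Submodule ℂ H) := hcl.completeSpace_coe
  set S' : (K × L) →L[ℂ] ↥(K ⊔ L) :=
    (addMap K L).codRestrict (K ⊔ L)
      (fun a => Submodule.mem_sup.2 ⟨a.1, a.1.2, a.2, a.2.2, rfl⟩) with hS'def
  have hS'app : ∀ a : K × L, (S' a : H) = ↑a.1 + ↑a.2 := fun a => rfl
  have hker : LinearMap.ker (S' : (K × L) →ₗ[ℂ] ↥(K ⊔ L)) = ⊥ := by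
    rw [LinearMap.ker_eq_bot']
    rintro ⟨x, y⟩ hxy
    have h0 : (x : H) + y = 0 := by
      have := congrArg (Subtype.val) hxy
      simpa [hS'app] using this
    have hxL : (x : H) ∈ L := by
      have : (x : H) = -(y : H) := eq_neg_of_add_eq_zero_left h0
      rw [this]; exact L.neg_mem y.2
    have hx0 : (x : H) = 0 := by
      have : (x : H) ∈ K ⊓ L := Submodule.mem_inf.2 ⟨x.2, hxL⟩
      rw [hKL] at this; exact this
    have hy0 : (y : H) = 0 := by rw [hx0, zero_add] at h0; exact h0
    ext <;> simp [hx0, hy0]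
  have hrange : LinearMap.range (S' : (K × L) →ₗ[ℂ] ↥(K ⊔ L)) = ⊤ := by
    rw [LinearMap.range_eq_top]
    rintro ⟨z, hz⟩
    obtain ⟨a, ha, b, hb, hab⟩ := Submodule.mem_sup.1 hz
    exact ⟨(⟨a, ha⟩, ⟨b, hb⟩), Subtype.ext (by simpa [hS'app] using hab)⟩
  obtain ⟨C, hC1, hCbound⟩ : ∃ C : ℝ, 1 ≤ C ∧ ∀ a : K × L, ‖a‖ ≤ C * ‖(S' a : H)‖ := by
    set e := ContinuousLinearEquiv.ofBijective S' hker hrange with hedef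
    refine ⟨max ‖(e.symm : ↥(K ⊔ L) →L[ℂ] K × L)‖ 1, le_max_right _ _, fun a => ?_⟩
    have h1 : a = e.symm (e a) := (e.symm_apply_apply a).symm
    have h2 : e a = S' a := rfl
    calc ‖a‖ = ‖e.symm (e a)‖ := by rw [← h1]
      _ ≤ ‖(e.symm : ↥(K ⊔ L) →L[ℂ] K × L)‖ * ‖e a‖ :=
          (e.symm : ↥(K ⊔ L) →L[ℂ] K × L).le_opNorm _
      _ ≤ max ‖(e.symm : ↥(K ⊔ L) →L[ℂ] K × L)‖ 1 * ‖e a‖ :=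
          mul_le_mul_of_nonneg_right (le_max_left _ _) (norm_nonneg _)
      _ = _ := by rw [h2]; rfl
  have hC0 : (0:ℝ) < C := lt_of_lt_of_le one_pos hC1
  refine ⟨Real.sqrt (1 - 1 / C ^ 2), Real.sqrt_nonneg _, ?_, ?_⟩
  · have h1 : 1 - 1 / C ^ 2 < 1 := by
      have : 0 < 1 / C ^ 2 := by positivity
      linarith
    calc Real.sqrt (1 - 1 / C ^ 2) < Real.sqrt 1 := by
          apply Real.sqrt_lt_sqrt ?_ h1
          have hC2 : (1:ℝ) ≤ C ^ 2 := by nlinarith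
          have : 1 / C ^ 2 ≤ 1 := by
            rw [div_le_one (by positivity)]; exact hC2
          linarith
      _ = 1 := Real.sqrt_one
  · intro x hx y hy hx1 hy1
    set i : ℂ := inner ℂ x y with hidef
    set t : ℂ := starRingEnd ℂ i with htdef
    set a : K × L := (⟨x, hx⟩, -(t • ⟨y, hy⟩)) with hadef
    have haS : (S' a : H) = x - t • y := by
      rw [hS'app]
      simp [hadef, sub_eq_add_neg]
    have hnormsq : ‖x - t • y‖ ^ 2 = 1 - ‖i‖ ^ 2 := by
      have h1 : ‖x - t • y‖ ^ 2 = ‖x‖ ^ 2 - 2 * RCLike.re (inner ℂ x (t • y) : ℂ) + ‖t • y‖ ^ 2 :=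
        norm_sub_sq _ _
      have h2 : (inner ℂ x (t • y) : ℂ) = t * i := by rw [inner_smul_right]
      have h3 : t * i = ((Complex.normSq i : ℝ) : ℂ) := by
        rw [htdef, mul_comm, Complex.mul_conj]
      have h4 : RCLike.re (inner ℂ x (t • y) : ℂ) = ‖i‖ ^ 2 := by
        rw [h2, h3]
        show (((Complex.normSq i : ℝ)) : ℂ).re = ‖i‖ ^ 2
        rw [Complex.ofReal_re, Complex.normSq_eq_norm_sq]
      have h5 : ‖t • y‖ = ‖i‖ := by
        rw [norm_smul, hy1, mul_one, htdef, RCLike.norm_conj]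
      rw [h1, h4, h5, hx1]; ring
    have hkey := hCbound a
    rw [haS] at hkey
    have hax : (1:ℝ) ≤ ‖a‖ := by
      have h9 := Prod.norm_def a
      have hxn : ‖a.1‖ = 1 := hx1
      rw [h9, hxn]
      exact le_max_left _ _
    clear_value S' i t a
    clear hCbound hS'app hker hrange haS
    have hs0 : (0:ℝ) ≤ ‖x - t • y‖ := norm_nonneg _
    have h7 : 1 ≤ C * ‖x - t • y‖ := le_trans hax hkey
    have h7' : (1:ℝ) * 1 ≤ (C * ‖x - t • y‖) * (C * ‖x - t • y‖) :=
      mul_le_mul h7 h7 zero_le_one (le_trans zero_le_one h7)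
    have h6 : 1 ≤ C ^ 2 * (1 - ‖i‖ ^ 2) := by
      calc (1:ℝ) = 1 * 1 := by ring
        _ ≤ (C * ‖x - t • y‖) * (C * ‖x - t • y‖) := h7'
        _ = C ^ 2 * ‖x - t • y‖ ^ 2 := by ring
        _ = C ^ 2 * (1 - ‖i‖ ^ 2) := by rw [hnormsq]
    have h8 : ‖i‖ ^ 2 ≤ 1 - 1 / C ^ 2 := by
      have hC2 : (0:ℝ) < C ^ 2 := by positivity
      have h10 : 1 / C ^ 2 ≤ 1 - ‖i‖ ^ 2 := by
        rw [div_le_iff₀ hC2]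
        nlinarith [h6]
      linarith
    calc ‖i‖ = Real.sqrt (‖i‖ ^ 2) := (Real.sqrt_sq (norm_nonneg _)).symm
      _ ≤ Real.sqrt (1 - 1 / C ^ 2) := Real.sqrt_le_sqrt h8

end FriedrichsAux
theorem isClosed_sup_iff_angleCos_lt_one (M N : Submodule ℂ H)
    (hM : IsClosed (M : Set H)) (hN : IsClosed (N : Set H)) :
    IsClosed ((M ⊔ N : Submodule ℂ H) : Set H) ↔ angleCos M N < 1 := by
  classical
  by_cases hns : M ≤ N ∨ N ≤ M
  · rw [angleCos, if_pos hns]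
    refine ⟨fun _ => one_pos, fun _ => ?_⟩
    rcases hns with h | h
    · rw [sup_eq_right.2 h]; exact hN
    · rw [sup_eq_left.2 h]; exact hM
  · rw [angleCos, if_neg hns]
    push_neg at hns
    obtain ⟨hMN, hNM⟩ := hns
    have hJ : IsClosed ((M ⊓ N : Submodule ℂ H) : Set H) := by
      rw [Submodule.coe_inf]; exact hM.inter hN
    have homM : ominus M N = M ⊓ (M ⊓ N)ᗮ := rfl
    have homN : ominus N M = N ⊓ (M ⊓ N)ᗮ := by
      rw [ominus, inf_comm N M]
    have hM' : IsClosed ((M ⊓ (M ⊓ N)ᗮ : Submodule ℂ H) : Set H) := by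
      rw [Submodule.coe_inf]; exact hM.inter (Submodule.isClosed_orthogonal _)
    have hN' : IsClosed ((N ⊓ (M ⊓ N)ᗮ : Submodule ℂ H) : Set H) := by
      rw [Submodule.coe_inf]; exact hN.inter (Submodule.isClosed_orthogonal _)
    have hMle : M ≤ (M ⊓ N) ⊔ (M ⊓ (M ⊓ N)ᗮ) := FriedrichsAux.le_sup_inf_orth hJ inf_le_left
    have hNle : N ≤ (M ⊓ N) ⊔ (N ⊓ (M ⊓ N)ᗮ) := FriedrichsAux.le_sup_inf_orth hJ inf_le_right
    have hsup : M ⊔ N = (M ⊓ N) ⊔ ((M ⊓ (M ⊓ N)ᗮ) ⊔ (N ⊓ (M ⊓ N)ᗮ)) := by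
      apply le_antisymm
      · exact sup_le (hMle.trans (sup_le_sup_left le_sup_left _))
          (hNle.trans (sup_le_sup_left le_sup_right _))
      · refine sup_le (le_trans inf_le_left le_sup_left) (sup_le ?_ ?_)
        · exact le_trans inf_le_left le_sup_left
        · exact le_trans inf_le_left le_sup_right
    have hiff : IsClosed ((M ⊔ N : Submodule ℂ H) : Set H) ↔
        IsClosed (((M ⊓ (M ⊓ N)ᗮ) ⊔ (N ⊓ (M ⊓ N)ᗮ) : Submodule ℂ H) : Set H) := by
      rw [hsup]
      exact FriedrichsAux.sup_closed_iff hJ (sup_le inf_le_right inf_le_right)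
    rw [hiff]
    have hM'ne : M ⊓ (M ⊓ N)ᗮ ≠ ⊥ := by
      intro h
      apply hMN
      intro x hx
      have hxm := hMle hx
      rw [h, sup_bot_eq] at hxm
      exact (Submodule.mem_inf.1 hxm).2
    have hN'ne : N ⊓ (M ⊓ N)ᗮ ≠ ⊥ := by
      intro h
      apply hNM
      intro x hx
      have hxm := hNle hx
      rw [h, sup_bot_eq] at hxm
      exact (Submodule.mem_inf.1 hxm).1
    have hdisj : (M ⊓ (M ⊓ N)ᗮ) ⊓ (N ⊓ (M ⊓ N)ᗮ) = ⊥ := by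
      rw [eq_bot_iff]
      intro x hx
      obtain ⟨hx1, hx2⟩ := Submodule.mem_inf.1 hx
      obtain ⟨hxM, hxO⟩ := Submodule.mem_inf.1 hx1
      obtain ⟨hxN, -⟩ := Submodule.mem_inf.1 hx2
      have hxJ : x ∈ M ⊓ N := Submodule.mem_inf.2 ⟨hxM, hxN⟩
      have : (inner ℂ x x : ℂ) = 0 := (Submodule.mem_orthogonal (M ⊓ N) x).1 hxO x hxJ
      exact (Submodule.mem_bot ℂ).2 (inner_self_eq_zero.1 this)
    obtain ⟨x0, hx0, hx0n⟩ := FriedrichsAux.exists_unit hM'ne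
    obtain ⟨y0, hy0, hy0n⟩ := FriedrichsAux.exists_unit hN'ne
    set Sset := {r : ℝ | ∃ x ∈ ominus M N, ∃ y ∈ ominus N M,
      ‖x‖ = 1 ∧ ‖y‖ = 1 ∧ r = ‖(inner ℂ x y : ℂ)‖} with hSdef
    have hSne : Sset.Nonempty :=
      ⟨‖(inner ℂ x0 y0 : ℂ)‖, x0, homM ▸ hx0, y0, homN ▸ hy0, hx0n, hy0n, rfl⟩
    have hSbdd : BddAbove Sset := by
      refine ⟨1, ?_⟩
      rintro r ⟨x, hx, y, hy, h1, h2, rfl⟩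
      calc ‖(inner ℂ x y : ℂ)‖ ≤ ‖x‖ * ‖y‖ := norm_inner_le_norm x y
        _ = 1 := by rw [h1, h2, mul_one]
    constructor
    · intro hcl
      obtain ⟨c, hc0, hc1, hc⟩ := FriedrichsAux.bound_of_closed hM' hN' hdisj hcl
      have : sSup Sset ≤ c := by
        apply Real.sSup_le ?_ hc0
        rintro r ⟨x, hx, y, hy, h1, h2, rfl⟩
        rw [homM] at hx
        rw [homN] at hy
        exact hc x hx y hy h1 h2
      exact lt_of_le_of_lt this hc1
    · intro hlt
      have h0 : 0 ≤ sSup Sset := Real.sSup_nonneg (by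
        rintro r ⟨x, hx, y, hy, h1, h2, rfl⟩
        exact norm_nonneg _)
      apply FriedrichsAux.closed_of_bound hM' hN' h0 hlt
      intro x hx y hy hx1 hy1
      apply le_csSup hSbdd
      exact ⟨x, homM ▸ hx, y, homN ▸ hy, hx1, hy1, rfl⟩
end
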